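/- For all μ, λ ∈ ℝ, as z → 0 from the left one has Δ(μ,λ;z) = B₀ (μλ + μ + λ)(−z)^{−1/2} + (1 − λ − μλ) + O((−z)^{1/2}) with the constant B₀ = 1/√2 > 0; i.e. the function z ↦ Δ(μ,λ;z) − B₀(μλ+μ+λ)(−z)^{−1/2} − (1−λ−μλ) is O((−z)^{1/2}) along left neighborhoods of 0. -/

import Mathlib

open MeasureTheory Real Filter Topology Asymptotics

/-- `a(z) = (1/2π)∫_{−π}^{π} dq/(z − 1 + cos q)`. -/
noncomputable def aF (z : ℝ) : ℝ :=
  (2 * Real.pi)⁻¹ * ∫ q in (-Real.pi)..Real.pi, (z - 1 + Real.cos q)⁻¹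

/-- `b(z) = −(1/2π)∫_{−π}^{π} cos q dq/(z − 1 + cos q)`. -/
noncomputable def bF (z : ℝ) : ℝ :=
  -((2 * Real.pi)⁻¹ * ∫ q in (-Real.pi)..Real.pi, Real.cos q / (z - 1 + Real.cos q))

/-- `c(z) = (1/2π)∫_{−π}^{π} cos² q dq/(z − 1 + cos q)`. -/
noncomputable def cF (z : ℝ) : ℝ :=
  (2 * Real.pi)⁻¹ * ∫ q in (-Real.pi)..Real.pi, (Real.cos q) ^ 2 / (z - 1 + Real.cos q)

/-- The Fredholm determinant `Δ(μ,λ;z) = (1 − μ a(z))(1 − λ c(z)) − μλ b(z)²`. -/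
noncomputable def Δdet (μ lam z : ℝ) : ℝ :=
  (1 - μ * aF z) * (1 - lam * cF z) - μ * lam * (bF z) ^ 2

section Aux

open Set

lemma denom_neg {z : ℝ} (hz : z < 0) (q : ℝ) : z - 1 + Real.cos q < 0 := by
  nlinarith [Real.cos_le_one q]

lemma denom_ne {z : ℝ} (hz : z < 0) (q : ℝ) : z - 1 + Real.cos q ≠ 0 :=
  (denom_neg hz q).ne

lemma cont_inv {z : ℝ} (hz : z < 0) : Continuous fun q : ℝ => (z - 1 + Real.cos q)⁻¹ := by
  exact ((continuous_const.add Real.continuous_cos).inv₀ (denom_ne hz))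

lemma integral_inv_eq {z : ℝ} (hz : z < 0) :
    ∫ q in (-Real.pi)..Real.pi, (z - 1 + Real.cos q)⁻¹
      = -(2 * Real.pi) / Real.sqrt ((-z) * (2 - z)) := by
  have hz0 : (0:ℝ) < -z := by linarith
  have h2z : (0:ℝ) < 2 - z := by linarith
  set s : ℝ := Real.sqrt ((-z) * (2 - z)) with hs_def
  have hs0 : 0 < s := Real.sqrt_pos.2 (by positivity)
  have hs2 : s ^ 2 = (-z) * (2 - z) := Real.sq_sqrt (by positivity)
  set k : ℝ := Real.sqrt ((2 - z) / (-z)) with hk_def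
  have hk0 : 0 < k := Real.sqrt_pos.2 (by positivity)
  have hk2 : k ^ 2 = (2 - z) / (-z) := Real.sq_sqrt (by positivity)
  have hsk : s = k * (-z) := by
    rw [hs_def, hk_def, show (-z) * (2 - z) = ((2 - z) / (-z)) * (-z)^2 by field_simp,
      Real.sqrt_mul (by positivity), Real.sqrt_sq hz0.le]
  set F : ℝ → ℝ := fun q => (-2 / s) * Real.arctan (k * Real.tan (q / 2)) with hF_def
  have hderiv : ∀ q ∈ Ioo (-Real.pi) Real.pi, HasDerivAt F ((z - 1 + Real.cos q)⁻¹) q := by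
    intro q hq
    have hq2 : q / 2 ∈ Ioo (-(Real.pi/2)) (Real.pi/2) := by
      constructor <;> [linarith [hq.1]; linarith [hq.2]]
    have hc : 0 < Real.cos (q / 2) := Real.cos_pos_of_mem_Ioo hq2
    have hcn : Real.cos (q / 2) ≠ 0 := hc.ne'
    have h1 : HasDerivAt (fun q : ℝ => Real.tan (q / 2)) (1 / Real.cos (q/2) ^ 2 * (1/2)) q :=
      by have := (Real.hasDerivAt_tan hcn).comp q ((hasDerivAt_id q).div_const 2); exact this
    have h2 : HasDerivAt (fun q : ℝ => k * Real.tan (q / 2))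
        (k * (1 / Real.cos (q/2) ^ 2 * (1/2))) q := h1.const_mul k
    have h3 : HasDerivAt (fun q : ℝ => Real.arctan (k * Real.tan (q / 2)))
        (1 / (1 + (k * Real.tan (q/2)) ^ 2) * (k * (1 / Real.cos (q/2) ^ 2 * (1/2)))) q :=
      by have := (Real.hasDerivAt_arctan (k * Real.tan (q/2))).comp q h2; exact this
    have h4 := h3.const_mul (-2 / s)
    refine h4.congr_deriv (Eq.symm ?_)
    have hcosq : Real.cos q = 2 * Real.cos (q/2) ^ 2 - 1 := by
      have := Real.cos_sq (q / 2)
      rw [show 2 * (q/2) = q by ring] at this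
      linarith
    have hsinq : Real.sin (q/2) ^ 2 = 1 - Real.cos (q/2) ^ 2 := by
      have := Real.sin_sq_add_cos_sq (q/2); linarith
    have htan : Real.tan (q/2) = Real.sin (q/2) / Real.cos (q/2) := Real.tan_eq_sin_div_cos _
    have hdq : z - 1 + Real.cos q ≠ 0 := denom_ne hz q
    have hpos : 1 + (k * Real.tan (q/2)) ^ 2 ≠ 0 := by positivity
    rw [htan] at hpos ⊢
    field_simp at hpos ⊢
    rw [hsk]
    have hk2' : k ^ 2 * z = z - 2 := by
      have h := hk2
      field_simp at h
      nlinarith [h]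
    rw [hcosq]
    linear_combination (-k^3*z) * hsinq
      + (-k*(1-Real.cos (q/2)^2)) * hk2'
  have hint : IntervalIntegrable (fun q : ℝ => (z - 1 + Real.cos q)⁻¹) volume (-Real.pi) Real.pi :=
    (cont_inv hz).intervalIntegrable _ _
  have htop : Tendsto F (𝓝[<] Real.pi) (𝓝 ((-2 / s) * (Real.pi / 2))) := by
    have h0 : Tendsto (fun q : ℝ => q / 2) (𝓝[<] Real.pi) (𝓝[<] (Real.pi / 2)) := by
      rw [tendsto_nhdsWithin_iff]
      constructor
      · exact (tendsto_id.div_const 2).mono_left nhdsWithin_le_nhds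
      · filter_upwards [self_mem_nhdsWithin] with q hq
        simp only [Set.mem_Iio] at hq ⊢
        linarith
    have h1 : Tendsto (fun q : ℝ => Real.tan (q / 2)) (𝓝[<] Real.pi) atTop :=
      Real.tendsto_tan_pi_div_two.comp h0
    have h2 : Tendsto (fun q : ℝ => k * Real.tan (q / 2)) (𝓝[<] Real.pi) atTop :=
      h1.const_mul_atTop hk0
    have h3 : Tendsto (fun q : ℝ => Real.arctan (k * Real.tan (q / 2))) (𝓝[<] Real.pi)
        (𝓝 (Real.pi / 2)) :=
      (Real.tendsto_arctan_atTop.mono_right nhdsWithin_le_nhds).comp h2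
    exact h3.const_mul _
  have hbot : Tendsto F (𝓝[>] (-Real.pi)) (𝓝 ((-2 / s) * (-(Real.pi / 2)))) := by
    have h0 : Tendsto (fun q : ℝ => q / 2) (𝓝[>] (-Real.pi)) (𝓝[>] (-(Real.pi / 2))) := by
      rw [tendsto_nhdsWithin_iff]
      constructor
      · have : Tendsto (fun q : ℝ => q / 2) (𝓝 (-Real.pi)) (𝓝 ((-Real.pi) / 2)) :=
          tendsto_id.div_const 2
        simpa [neg_div] using this.mono_left nhdsWithin_le_nhds
      · filter_upwards [self_mem_nhdsWithin] with q hq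
        simp only [Set.mem_Ioi] at hq ⊢
        linarith
    have h1 : Tendsto (fun q : ℝ => Real.tan (q / 2)) (𝓝[>] (-Real.pi)) atBot :=
      Real.tendsto_tan_neg_pi_div_two.comp h0
    have h2 : Tendsto (fun q : ℝ => k * Real.tan (q / 2)) (𝓝[>] (-Real.pi)) atBot :=
      h1.const_mul_atBot hk0
    have h3 : Tendsto (fun q : ℝ => Real.arctan (k * Real.tan (q / 2))) (𝓝[>] (-Real.pi))
        (𝓝 (-(Real.pi / 2))) :=
      (Real.tendsto_arctan_atBot.mono_right nhdsWithin_le_nhds).comp h2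
    exact h3.const_mul _
  have := intervalIntegral.integral_eq_sub_of_hasDerivAt_of_tendsto
    (by linarith [Real.pi_pos] : -Real.pi < Real.pi) hderiv hint hbot htop
  rw [this]
  field_simp
  ring

lemma integral_cosdiv_eq {z : ℝ} (hz : z < 0) :
    ∫ q in (-Real.pi)..Real.pi, Real.cos q / (z - 1 + Real.cos q)
      = 2 * Real.pi - (z - 1) * (-(2 * Real.pi) / Real.sqrt ((-z) * (2 - z))) := by
  have hcongr : Set.EqOn (fun q : ℝ => Real.cos q / (z - 1 + Real.cos q))
      (fun q : ℝ => 1 - (z - 1) * (z - 1 + Real.cos q)⁻¹) (Set.uIcc (-Real.pi) Real.pi) := by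
    intro q _
    have := denom_ne hz q
    field_simp
    ring
  rw [intervalIntegral.integral_congr hcongr,
    intervalIntegral.integral_sub (g := fun q : ℝ => (z - 1) * (z - 1 + Real.cos q)⁻¹) (intervalIntegrable_const)
      ((continuous_const.mul (cont_inv hz)).intervalIntegrable _ _ :
        IntervalIntegrable (fun q : ℝ => (z - 1) * (z - 1 + Real.cos q)⁻¹) volume (-Real.pi) Real.pi),
    intervalIntegral.integral_const_mul, integral_inv_eq hz]
  simp
  ring

lemma integral_cossqdiv_eq {z : ℝ} (hz : z < 0) :
    ∫ q in (-Real.pi)..Real.pi, (Real.cos q) ^ 2 / (z - 1 + Real.cos q)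
      = -(z - 1) * (2 * Real.pi) + (z - 1) ^ 2 * (-(2 * Real.pi) / Real.sqrt ((-z) * (2 - z))) := by
  have hcongr : Set.EqOn (fun q : ℝ => (Real.cos q) ^ 2 / (z - 1 + Real.cos q))
      (fun q : ℝ => (Real.cos q - (z - 1)) + (z - 1) ^ 2 * (z - 1 + Real.cos q)⁻¹)
      (Set.uIcc (-Real.pi) Real.pi) := by
    intro q _
    have := denom_ne hz q
    field_simp
    ring
  rw [intervalIntegral.integral_congr hcongr,
    intervalIntegral.integral_add (f := fun q : ℝ => Real.cos q - (z - 1))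
      (g := fun q : ℝ => (z - 1) ^ 2 * (z - 1 + Real.cos q)⁻¹)
      (((Real.continuous_cos.sub continuous_const)).intervalIntegrable _ _ :
        IntervalIntegrable (fun q : ℝ => Real.cos q - (z - 1)) volume (-Real.pi) Real.pi)
      ((continuous_const.mul (cont_inv hz)).intervalIntegrable _ _ :
        IntervalIntegrable (fun q : ℝ => (z - 1) ^ 2 * (z - 1 + Real.cos q)⁻¹) volume (-Real.pi) Real.pi),
    intervalIntegral.integral_const_mul, integral_inv_eq hz,
    intervalIntegral.integral_sub (Real.continuous_cos.intervalIntegrable _ _)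
      intervalIntegrable_const]
  simp [integral_cos]
  ring

lemma aF_eq {z : ℝ} (hz : z < 0) : aF z = -(Real.sqrt ((-z) * (2 - z)))⁻¹ := by
  have hπ := Real.pi_pos
  have hs0 : 0 < Real.sqrt ((-z) * (2 - z)) :=
    Real.sqrt_pos.2 (by nlinarith)
  rw [aF, integral_inv_eq hz]
  field_simp

lemma bF_eq {z : ℝ} (hz : z < 0) :
    bF z = -1 - (z - 1) * (Real.sqrt ((-z) * (2 - z)))⁻¹ := by
  have hπ := Real.pi_pos
  have hs0 : 0 < Real.sqrt ((-z) * (2 - z)) :=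
    Real.sqrt_pos.2 (by nlinarith)
  rw [bF, integral_cosdiv_eq hz]
  field_simp
  ring

lemma cF_eq {z : ℝ} (hz : z < 0) :
    cF z = -(z - 1) - (z - 1) ^ 2 * (Real.sqrt ((-z) * (2 - z)))⁻¹ := by
  have hπ := Real.pi_pos
  have hs0 : 0 < Real.sqrt ((-z) * (2 - z)) :=
    Real.sqrt_pos.2 (by nlinarith)
  rw [cF, integral_cossqdiv_eq hz]
  field_simp
  ring

lemma Δdet_eq (μ lam : ℝ) {z : ℝ} (hz : z < 0) :
    Δdet μ lam z = (1 - μ * lam + lam * (z - 1))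
      + (lam * (z - 1) ^ 2 + μ - μ * lam * (z - 1)) * (Real.sqrt ((-z) * (2 - z)))⁻¹ := by
  have hs0 : 0 < Real.sqrt ((-z) * (2 - z)) :=
    Real.sqrt_pos.2 (by nlinarith)
  rw [Δdet, aF_eq hz, bF_eq hz, cF_eq hz]
  field_simp
  ring

/-- Auxiliary function for the asymptotic expansion. -/
noncomputable def hAux (μ lam z : ℝ) : ℝ :=
  (lam * (z - 1) ^ 2 + μ - μ * lam * (z - 1)) * (Real.sqrt (2 - z))⁻¹
    - (μ * lam + μ + lam) * (Real.sqrt 2)⁻¹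

lemma hAux_isBigO (μ lam : ℝ) : (fun z => hAux μ lam z) =O[𝓝 (0:ℝ)] (fun z => z) := by
  have hsd : DifferentiableAt ℝ (fun z : ℝ => Real.sqrt (2 - z)) 0 := by
    have h := (Real.hasDerivAt_sqrt (by norm_num : (2:ℝ) - 0 ≠ 0)).comp 0
      ((hasDerivAt_const (0:ℝ) (2:ℝ)).sub (hasDerivAt_id 0))
    exact h.differentiableAt
  have hne : Real.sqrt (2 - (0:ℝ)) ≠ 0 := by
    have : (0:ℝ) < Real.sqrt (2 - 0) := Real.sqrt_pos.2 (by norm_num)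
    exact this.ne'
  have hdiff : DifferentiableAt ℝ (fun z => hAux μ lam z) 0 := by
    unfold hAux
    exact ((by fun_prop : DifferentiableAt ℝ
      (fun z : ℝ => lam * (z - 1) ^ 2 + μ - μ * lam * (z - 1)) 0).mul
      (hsd.inv hne)).sub (differentiableAt_const _)
  have h0 : hAux μ lam 0 = 0 := by
    unfold hAux
    norm_num
    ring
  simpa [h0] using hdiff.isBigO_sub

end Aux

/-- For all `μ, λ ∈ ℝ`, as `z → 0⁻`:
`Δ(μ,λ;z) = B₀ (μλ + μ + λ)(−z)^{−1/2} + (1 − λ − μλ) + O((−z)^{1/2})`,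
with `B₀ = 1/√2 > 0`. -/
theorem det_asymptotics_left_of_zero (μ lam : ℝ) :
    (0 : ℝ) < (Real.sqrt 2)⁻¹ ∧
    (fun z : ℝ => Δdet μ lam z
        - (Real.sqrt 2)⁻¹ * (μ * lam + μ + lam) * (-z) ^ (-(1/2) : ℝ)
        - (1 - lam - μ * lam))
      =O[𝓝[<] (0:ℝ)] (fun z : ℝ => (-z) ^ ((1/2) : ℝ)) := by
  constructor
  · exact inv_pos.2 (Real.sqrt_pos.2 two_pos)
  obtain ⟨C, hC⟩ := (hAux_isBigO μ lam).bound
  apply Asymptotics.IsBigO.of_bound (|lam| + C)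
  filter_upwards [Ioo_mem_nhdsLT_of_mem
      (show (0:ℝ) ∈ Set.Ioc (-1 : ℝ) 0 by norm_num),
    (hC.filter_mono (nhdsWithin_le_nhds))] with z hzIoo hCz
  have hz0 : z < 0 := hzIoo.2
  have ht : (0:ℝ) < -z := by linarith
  have ht1 : -z ≤ 1 := by linarith [hzIoo.1]
  have hsz : 0 < Real.sqrt (-z) := Real.sqrt_pos.2 ht
  have hs2z : 0 < Real.sqrt (2 - z) := Real.sqrt_pos.2 (by linarith)
  have hsplit : Real.sqrt ((-z) * (2 - z)) = Real.sqrt (-z) * Real.sqrt (2 - z) :=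
    Real.sqrt_mul ht.le _
  have hrpow_pos : (-z) ^ ((1/2) : ℝ) = Real.sqrt (-z) := (Real.sqrt_eq_rpow (-z)).symm
  have hrpow_neg : (-z) ^ (-(1/2) : ℝ) = (Real.sqrt (-z))⁻¹ := by
    rw [Real.rpow_neg ht.le, ← hrpow_pos]
  have hEq : Δdet μ lam z
        - (Real.sqrt 2)⁻¹ * (μ * lam + μ + lam) * (-z) ^ (-(1/2) : ℝ)
        - (1 - lam - μ * lam)
      = lam * z + (Real.sqrt (-z))⁻¹ * hAux μ lam z := by
    rw [Δdet_eq μ lam hz0, hsplit, hrpow_neg]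
    unfold hAux
    field_simp
    ring
  rw [hEq, hrpow_pos]
  have hzsq : -z = Real.sqrt (-z) * Real.sqrt (-z) := (Real.mul_self_sqrt ht.le).symm
  have hle1 : -z ≤ Real.sqrt (-z) := by
    nlinarith [Real.sq_sqrt ht.le, Real.sqrt_nonneg (-z)]
  have hb1 : |lam * z| ≤ |lam| * Real.sqrt (-z) := by
    rw [abs_mul]
    have : |z| = -z := abs_of_neg hz0
    rw [this]
    exact mul_le_mul_of_nonneg_left hle1 (abs_nonneg _)
  have hb2 : ‖(Real.sqrt (-z))⁻¹ * hAux μ lam z‖ ≤ C * Real.sqrt (-z) := by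
    rw [norm_mul, norm_inv, Real.norm_eq_abs, abs_of_pos hsz]
    have hzn : ‖z‖ = -z := by rw [Real.norm_eq_abs, abs_of_neg hz0]
    rw [hzn] at hCz
    calc (Real.sqrt (-z))⁻¹ * ‖hAux μ lam z‖
        ≤ (Real.sqrt (-z))⁻¹ * (C * (-z)) := by
          exact mul_le_mul_of_nonneg_left hCz (by positivity)
      _ = C * Real.sqrt (-z) := by
          rw [hzsq]
          field_simp
          rw [Real.sqrt_sq hsz.le]
  calc ‖lam * z + (Real.sqrt (-z))⁻¹ * hAux μ lam z‖
      ≤ ‖lam * z‖ + ‖(Real.sqrt (-z))⁻¹ * hAux μ lam z‖ := norm_add_le _ _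
    _ ≤ |lam| * Real.sqrt (-z) + C * Real.sqrt (-z) := add_le_add hb1 hb2
    _ = (|lam| + C) * Real.sqrt (-z) := by ring
    _ = (|lam| + C) * ‖Real.sqrt (-z)‖ := by rw [Real.norm_eq_abs, abs_of_pos hsz]
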